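/- There exists a Hilbert holomorphic function space H on the unit disk in which the polynomials are dense, and a function f ∈ H, such that f does not lie in the closed linear span of its Taylor partial sums {s_n(f) : n ≥ 0}. Consequently, there is no sequence of linear maps T_n : H → H of the form T_n(f) = Σ_{k=0}^n c_{nk} s_k(f) (for any triangular array of complex numbers c_{nk}) with ‖T_n(f) − f‖_H → 0. -/

import Mathlib

open Metric Filter
open scoped ENNReal NNReal

noncomputable section Stmt15Aux

abbrev Hs : Type := lp (fun _ : ℕ => ℂ) 2

/-- Taylor coefficient functionals. -/
def cf (y : Hs) (m : ℕ) : ℂ :=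
  if Even m then (2:ℂ)⁻¹ ^ (m/2) * y (m + 2)
  else (2:ℂ)⁻¹ ^ (m/2) * (y 0 + y m + ∑ j ∈ Finset.range (m/2 + 1), y (2*j + 2))

theorem cf_add (x y : Hs) (m : ℕ) : cf (x + y) m = cf x m + cf y m := by
  have h : ∀ k, (x + y) k = x k + y k := fun k => by
    rw [lp.coeFn_add]; rfl
  unfold cf
  split_ifs <;> simp [h, Finset.sum_add_distrib] <;> ring

theorem cf_smul (c : ℂ) (y : Hs) (m : ℕ) : cf (c • y) m = c * cf y m := by
  have h : ∀ k, (c • y) k = c * y k := fun k => by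
    rw [lp.coeFn_smul]; rfl
  unfold cf
  split_ifs <;> simp [h, ← Finset.mul_sum] <;> ring

def rr : ℝ := Real.sqrt 2⁻¹

theorem rr_sq : rr ^ 2 = 2⁻¹ := Real.sq_sqrt (by norm_num)
theorem rr_nonneg : 0 ≤ rr := Real.sqrt_nonneg _
theorem rr_le_one : rr ≤ 1 := by nlinarith [rr_sq, rr_nonneg]
theorem rr_lt_one : rr < 1 := by nlinarith [rr_sq, rr_nonneg]
theorem one_le_two_rr : 1 ≤ 2 * rr := by nlinarith [rr_sq, rr_nonneg]

theorem half_pow_le (m : ℕ) : (2:ℝ)⁻¹ ^ (m/2) ≤ 2 * rr ^ m := by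
  have h1 : (2:ℝ)⁻¹ ^ (m/2) = rr ^ (2 * (m/2)) := by
    rw [pow_mul, rr_sq]
  rw [h1]
  have h2 : rr ^ (2 * (m/2)) ≤ rr ^ (m - 1) :=
    pow_le_pow_of_le_one rr_nonneg rr_le_one (by omega)
  refine h2.trans ?_
  cases m with
  | zero => simpa using rr_le_one.trans (by norm_num)
  | succ n =>
    have : rr ^ (n + 1 - 1) = rr ^ n := by norm_num
    rw [this, pow_succ]
    calc rr ^ n = 1 * rr ^ n := (one_mul _).symm
    _ ≤ (2 * rr) * rr ^ n := by
        exact mul_le_mul_of_nonneg_right one_le_two_rr (pow_nonneg rr_nonneg n)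
    _ = 2 * (rr ^ n * rr) := by ring

def uu0 (m : ℕ) : ℝ := 2 * ((m:ℝ) + 3) * rr ^ m

theorem summable_uu0 : Summable uu0 := by
  have h1 : Summable (fun m : ℕ => (m:ℝ) * rr ^ m) := by
    simpa using summable_pow_mul_geometric_of_norm_lt_one (r := rr) 1
      (by rw [Real.norm_eq_abs, abs_of_nonneg rr_nonneg]; exact rr_lt_one)
  have h2 : Summable (fun m : ℕ => rr ^ m) :=
    summable_geometric_of_lt_one rr_nonneg rr_lt_one
  have := (h1.add (h2.mul_left 3)).mul_left 2
  refine this.congr fun m => ?_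
  unfold uu0; ring

theorem norm_coord_le (y : Hs) (k : ℕ) : ‖y k‖ ≤ ‖y‖ :=
  lp.norm_apply_le_norm (by norm_num) y k

theorem cf_bound (y : Hs) (m : ℕ) : ‖cf y m‖ ≤ ‖y‖ * uu0 m := by
  have hhalf : ‖(2:ℂ)⁻¹ ^ (m/2)‖ = (2:ℝ)⁻¹ ^ (m/2) := by
    rw [norm_pow, norm_inv]
    norm_num
  have hy0 : (0:ℝ) ≤ ‖y‖ := norm_nonneg _
  have hb : (2:ℝ)⁻¹ ^ (m/2) ≤ 2 * rr ^ m := half_pow_le m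
  have hpos : (0:ℝ) ≤ (2:ℝ)⁻¹ ^ (m/2) := by positivity
  unfold cf
  split_ifs with h
  · rw [norm_mul, hhalf]
    calc (2:ℝ)⁻¹ ^ (m/2) * ‖y (m+2)‖ ≤ (2 * rr ^ m) * (((m:ℝ)+3) * ‖y‖) := by
          refine mul_le_mul hb ?_ (norm_nonneg _) (mul_nonneg (by norm_num) (pow_nonneg rr_nonneg m))
          calc ‖y (m+2)‖ ≤ ‖y‖ := norm_coord_le y _
          _ = 1 * ‖y‖ := (one_mul _).symm
          _ ≤ ((m:ℝ)+3) * ‖y‖ := by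
              refine mul_le_mul_of_nonneg_right (by push_cast; linarith [Nat.cast_nonneg (α := ℝ) m]) hy0
    _ = ‖y‖ * uu0 m := by unfold uu0; ring
  · rw [norm_mul, hhalf]
    have hsum : ‖y 0 + y m + ∑ j ∈ Finset.range (m/2 + 1), y (2*j + 2)‖
        ≤ ((m:ℝ) + 3) * ‖y‖ := by
      calc ‖y 0 + y m + ∑ j ∈ Finset.range (m/2 + 1), y (2*j + 2)‖
          ≤ ‖y 0‖ + ‖y m‖ + ‖∑ j ∈ Finset.range (m/2 + 1), y (2*j + 2)‖ :=
            norm_add₃_le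
      _ ≤ ‖y‖ + ‖y‖ + ∑ j ∈ Finset.range (m/2 + 1), ‖y (2*j + 2)‖ := by
            gcongr
            · exact norm_coord_le y 0
            · exact norm_coord_le y m
            · exact norm_sum_le _ _
      _ ≤ ‖y‖ + ‖y‖ + ∑ j ∈ Finset.range (m/2 + 1), ‖y‖ := by
            gcongr with j hj
            exact norm_coord_le y _
      _ = (((m/2 : ℕ) : ℝ) + 3) * ‖y‖ := by
            rw [Finset.sum_const, Finset.card_range]
            push_cast; ring
      _ ≤ ((m:ℝ) + 3) * ‖y‖ := by
            refine mul_le_mul_of_nonneg_right ?_ hy0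
            have : (m/2 : ℕ) ≤ m := Nat.div_le_self m 2
            push_cast
            have : ((m/2 : ℕ) : ℝ) ≤ (m : ℝ) := by exact_mod_cast this
            linarith
    calc (2:ℝ)⁻¹ ^ (m/2) * ‖y 0 + y m + ∑ j ∈ Finset.range (m/2 + 1), y (2*j + 2)‖
        ≤ (2 * rr ^ m) * (((m:ℝ)+3) * ‖y‖) := by
          refine mul_le_mul hb hsum (norm_nonneg _) (mul_nonneg (by norm_num) (pow_nonneg rr_nonneg m))
    _ = ‖y‖ * uu0 m := by unfold uu0; ring

theorem cf_z_bound (y : Hs) {z : ℂ} (hz : ‖z‖ ≤ 1) (m : ℕ) :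
    ‖cf y m * z ^ m‖ ≤ ‖y‖ * uu0 m := by
  rw [norm_mul, norm_pow]
  calc ‖cf y m‖ * ‖z‖ ^ m ≤ (‖y‖ * uu0 m) * 1 := by
        refine mul_le_mul (cf_bound y m) ?_ (by positivity) ?_
        · exact pow_le_one₀ (norm_nonneg z) hz
        · have := cf_bound y m
          have h2 : (0:ℝ) ≤ ‖cf y m‖ := norm_nonneg _
          linarith
  _ = ‖y‖ * uu0 m := mul_one _

theorem summable_cf (y : Hs) {z : ℂ} (hz : ‖z‖ ≤ 1) :
    Summable (fun m => cf y m * z ^ m) := by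
  refine Summable.of_norm (Summable.of_nonneg_of_le (fun m => norm_nonneg _)
    (fun m => cf_z_bound y hz m) (summable_uu0.mul_left ‖y‖))

def iotaL : Hs →ₗ[ℂ] (ℂ → ℂ) where
  toFun y := fun z => if ‖z‖ < 1 then ∑' m, cf y m * z ^ m else 0
  map_add' x y := funext fun z => by
    simp only [Pi.add_apply]
    split_ifs with hz
    · rw [← Summable.tsum_add (summable_cf x hz.le) (summable_cf y hz.le)]
      exact tsum_congr fun m => by rw [cf_add]; ring
    · simp
  map_smul' c y := funext fun z => by
    simp only [RingHom.id_apply, Pi.smul_apply, smul_eq_mul]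
    split_ifs with hz
    · rw [← tsum_mul_left]
      exact tsum_congr fun m => by rw [cf_smul]; ring
    · simp

theorem iotaL_apply (y : Hs) {z : ℂ} (hz : ‖z‖ < 1) :
    iotaL y z = ∑' m, cf y m * z ^ m := if_pos hz

theorem hasSum_iotaL (y : Hs) {z : ℂ} (hz : ‖z‖ < 1) :
    HasSum (fun m => cf y m * z ^ m) (iotaL y z) := by
  rw [iotaL_apply y hz]
  exact (summable_cf y hz.le).hasSum



theorem tsum_uu0_nonneg : (0:ℝ) ≤ ∑' m, uu0 m :=
  tsum_nonneg fun m => by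
    unfold uu0
    have := pow_nonneg rr_nonneg m
    positivity

theorem summable_norm_cf (y : Hs) {z : ℂ} (hz : ‖z‖ ≤ 1) :
    Summable (fun m => ‖cf y m * z ^ m‖) :=
  Summable.of_nonneg_of_le (fun m => norm_nonneg _)
    (fun m => cf_z_bound y hz m) (summable_uu0.mul_left ‖y‖)

theorem iotaL_norm_le (y : Hs) (z : ℂ) : ‖iotaL y z‖ ≤ (∑' m, uu0 m) * ‖y‖ := by
  have : iotaL y z = if ‖z‖ < 1 then ∑' m, cf y m * z ^ m else 0 := rfl
  rw [this]
  split_ifs with hz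
  · calc ‖∑' m, cf y m * z ^ m‖ ≤ ∑' m, ‖cf y m * z ^ m‖ :=
        norm_tsum_le_tsum_norm (summable_norm_cf y hz.le)
    _ ≤ ∑' m, ‖y‖ * uu0 m := by
        exact Summable.tsum_le_tsum (fun m => cf_z_bound y hz.le m) (summable_norm_cf y hz.le) (summable_uu0.mul_left ‖y‖)
    _ = ‖y‖ * ∑' m, uu0 m := tsum_mul_left
    _ = (∑' m, uu0 m) * ‖y‖ := mul_comm _ _
  · simp only [norm_zero]
    exact mul_nonneg tsum_uu0_nonneg (norm_nonneg y)

theorem iotaL_differentiableOn (y : Hs) : DifferentiableOn ℂ (iotaL y) (ball (0:ℂ) 1) := by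
  have hTU : TendstoUniformlyOn (fun (N : Finset ℕ) z => ∑ m ∈ N, cf y m * z ^ m)
      (fun z => ∑' m, cf y m * z ^ m) atTop (ball (0:ℂ) 1) :=
    tendstoUniformlyOn_tsum (summable_uu0.mul_left ‖y‖)
      (fun m z hz => cf_z_bound y (le_of_lt (mem_ball_zero_iff.mp hz)) m)
  have hTU2 : TendstoUniformlyOn (fun (N : Finset ℕ) z => ∑ m ∈ N, cf y m * z ^ m)
      (iotaL y) atTop (ball (0:ℂ) 1) := by
    refine hTU.congr_right fun z hz => ?_
    exact (iotaL_apply y (mem_ball_zero_iff.mp hz)).symm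
  refine hTU2.tendstoLocallyUniformlyOn.differentiableOn ?_ isOpen_ball
  exact Eventually.of_forall fun N =>
    (Differentiable.fun_sum fun m _ => (differentiable_const (cf y m)).mul (differentiable_pow m)).differentiableOn


theorem cf_eq_zero_of_iotaL_zero {y : Hs} (h0 : ∀ z ∈ ball (0:ℂ) 1, iotaL y z = 0) :
    ∀ m, cf y m = 0 := by
  set p : FormalMultilinearSeries ℂ ℂ ℂ := FormalMultilinearSeries.ofScalars ℂ (cf y) with hp
  have hrad : (1 : ℝ≥0∞) ≤ p.radius := by
    have h1 : Summable fun n => ‖p n‖ * ((1:ℝ≥0) : ℝ) ^ n := by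
      refine Summable.of_nonneg_of_le (fun n => by positivity) (fun n => ?_)
        (summable_uu0.mul_left ‖y‖)
      rw [hp, FormalMultilinearSeries.ofScalars_norm]
      simpa using cf_bound y n
    simpa using FormalMultilinearSeries.le_radius_of_summable_norm p h1
  have hball : HasFPowerSeriesOnBall (0 : ℂ → ℂ) p 0 1 := by
    refine ⟨hrad, by norm_num, ?_⟩
    intro w hw
    have hw' : ‖w‖ < 1 := by
      rw [mem_emetric_ball_zero_iff, enorm_eq_nnnorm] at hw
      exact_mod_cast hw
    have h1 : HasSum (fun n => cf y n * w ^ n) (iotaL y w) := hasSum_iotaL y hw'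
    have h2 : iotaL y w = 0 := h0 w (mem_ball_zero_iff.mpr hw')
    have h3 : (fun n => p n fun _ => w) = fun n => cf y n * w ^ n := by
      funext n
      rw [hp, FormalMultilinearSeries.ofScalars_apply_eq]
      simp [smul_eq_mul]
    rw [h3]
    simpa [h2] using h1
  have hzero : p = 0 := hball.hasFPowerSeriesAt.eq_zero
  intro m
  have hm : p m = 0 := by rw [hzero]; rfl
  rw [hp] at hm
  exact (FormalMultilinearSeries.ofScalars_eq_zero ℂ m).mp hm

theorem coords_tendsto_zero (y : Hs) : Tendsto (fun k => y k) atTop (nhds (0:ℂ)) := by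
  have hsum : Summable (fun i => ‖y i‖ ^ (2:ℝ≥0∞).toReal) :=
    (lp.hasSum_norm (by norm_num) y).summable
  have h1 : Tendsto (fun i => ‖y i‖ ^ (2:ℝ≥0∞).toReal) atTop (nhds 0) :=
    hsum.tendsto_atTop_zero
  have h2 : Tendsto (fun i => Real.sqrt (‖y i‖ ^ (2:ℝ≥0∞).toReal)) atTop (nhds (Real.sqrt 0)) :=
    (Real.continuous_sqrt.tendsto 0).comp h1
  have heq : (fun i => Real.sqrt (‖y i‖ ^ (2:ℝ≥0∞).toReal)) = fun i => ‖y i‖ := by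
    funext i
    rw [show ((2:ℝ≥0∞).toReal) = ((2:ℕ):ℝ) by norm_num, Real.rpow_natCast,
      Real.sqrt_sq (norm_nonneg _)]
  rw [heq, Real.sqrt_zero] at h2
  exact tendsto_zero_iff_norm_tendsto_zero.mpr h2

theorem iotaL_eq_zero {y : Hs} (h0 : ∀ z ∈ ball (0:ℂ) 1, iotaL y z = 0) : y = 0 := by
  have hcf := cf_eq_zero_of_iotaL_zero h0
  have heven : ∀ k, y (2*k+2) = 0 := by
    intro k
    have h := hcf (2*k)
    unfold cf at h
    rw [if_pos (even_two_mul k)] at h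
    have h2 : ((2:ℂ)⁻¹) ^ (2*k/2) ≠ 0 := pow_ne_zero _ (by norm_num)
    rcases mul_eq_zero.mp h with h3 | h3
    · exact absurd h3 h2
    · simpa [Nat.mul_div_cancel_left] using h3
  have hodd : ∀ k, y (2*k+1) = - y 0 := by
    intro k
    have h := hcf (2*k+1)
    unfold cf at h
    rw [if_neg (by simp [Nat.even_add_one, Nat.even_mul])] at h
    have h2 : ((2:ℂ)⁻¹) ^ ((2*k+1)/2) ≠ 0 := pow_ne_zero _ (by norm_num)
    rcases mul_eq_zero.mp h with h3 | h3
    · exact absurd h3 h2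
    · have hs : ∑ j ∈ Finset.range ((2*k+1)/2 + 1), y (2*j + 2) = 0 :=
        Finset.sum_eq_zero fun j _ => heven j
      rw [hs] at h3
      linear_combination h3
  have hy0 : y 0 = 0 := by
    have hm : Tendsto (fun k : ℕ => 2*k+1) atTop atTop :=
      tendsto_atTop_atTop_of_monotone (fun a b hab => by omega) (fun b => ⟨b, by omega⟩)
    have h1 : Tendsto (fun k => y (2*k+1)) atTop (nhds (0:ℂ)) :=
      (coords_tendsto_zero y).comp hm
    have h2 : (fun k => y (2*k+1)) = fun _ : ℕ => - y 0 := funext fun k => hodd k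
    rw [h2] at h1
    have h3 := tendsto_nhds_unique h1 tendsto_const_nhds
    simpa using h3.symm
  have hz : ∀ m, y m = 0 := by
    intro m
    rcases Nat.even_or_odd m with ⟨t, ht⟩ | ⟨t, ht⟩
    · subst ht
      rcases t with _ | k
      · simpa using hy0
      · rw [show (k+1)+(k+1) = 2*k+2 from by omega]
        exact heven k
    · subst ht
      rw [hodd t, hy0, neg_zero]
  have hco : ⇑y = ⇑(0 : Hs) := by
    rw [lp.coeFn_zero]
    funext m
    exact hz m
  exact lp.ext hco


def ee (n : ℕ) : Hs := lp.single 2 n 1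

theorem ee_apply (n m : ℕ) : ee n m = if m = n then 1 else 0 := by
  by_cases h : m = n
  · subst h; simp [ee, lp.single_apply_self]
  · simp [ee, lp.single_apply_ne 2 n _ h, h]

def cfL : Hs →ₗ[ℂ] (ℕ → ℂ) where
  toFun := cf
  map_add' x y := funext (cf_add x y)
  map_smul' c y := funext fun m => by simpa using cf_smul c y m

theorem cf_ee_zero (m : ℕ) : cf (ee 0) m = if Even m then 0 else (2:ℂ)⁻¹ ^ (m/2) := by
  unfold cf
  split_ifs with h
  · rw [ee_apply]; simp
  · have hm : m ≠ 0 := by rintro rfl; exact h (by simp)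
    have hs : ∑ j ∈ Finset.range (m/2 + 1), (ee 0) (2*j + 2) = 0 :=
      Finset.sum_eq_zero fun j _ => by rw [ee_apply]; exact if_neg (by omega)
    rw [ee_apply, ee_apply, hs, if_pos rfl, if_neg hm]
    ring

theorem cf_ee_odd (l m : ℕ) : cf (ee (2*l+1)) m =
    if m = 2*l+1 then (2:ℂ)⁻¹ ^ l else 0 := by
  unfold cf
  by_cases h : Even m
  · have h2 : m % 2 = 0 := Nat.even_iff.mp h
    rw [if_pos h, ee_apply, if_neg (by omega), if_neg (by omega), mul_zero]
  · have h2 : m % 2 = 1 := Nat.odd_iff.mp (Nat.not_even_iff_odd.mp h)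
    have hs : ∑ j ∈ Finset.range (m/2 + 1), (ee (2*l+1)) (2*j + 2) = 0 :=
      Finset.sum_eq_zero fun j _ => by rw [ee_apply]; exact if_neg (by omega)
    rw [if_neg h, ee_apply, ee_apply, hs, if_neg (by omega : ¬(0:ℕ) = 2*l+1)]
    by_cases hm : m = 2*l+1
    · have hl : m / 2 = l := by omega
      rw [if_pos hm, if_pos hm, hl]
      ring
    · rw [if_neg hm, if_neg hm]
      ring

theorem cf_ee_even (j m : ℕ) : cf (ee (2*j+2)) m =
    if Even m then (if m = 2*j then (2:ℂ)⁻¹ ^ j else 0)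
    else (if j ≤ m/2 then (2:ℂ)⁻¹ ^ (m/2) else 0) := by
  unfold cf
  by_cases h : Even m
  · have h2 : m % 2 = 0 := Nat.even_iff.mp h
    rw [if_pos h, if_pos h, ee_apply]
    by_cases hm : m = 2*j
    · have hj : m / 2 = j := by omega
      rw [if_pos (by omega : m + 2 = 2*j+2), if_pos hm, hj, mul_one]
    · rw [if_neg (by omega : ¬ m + 2 = 2*j+2), if_neg hm, mul_zero]
  · have h2 : m % 2 = 1 := Nat.odd_iff.mp (Nat.not_even_iff_odd.mp h)
    rw [if_neg h, if_neg h, ee_apply, ee_apply, if_neg (by omega : ¬(0:ℕ) = 2*j+2),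
      if_neg (by omega : ¬ m = 2*j+2)]
    have hsum : ∑ i ∈ Finset.range (m/2 + 1), (ee (2*j+2)) (2*i + 2)
        = if j ≤ m/2 then 1 else 0 := by
      by_cases hj : j ≤ m/2
      · rw [if_pos hj]
        rw [Finset.sum_eq_single j
          (fun b _ hne => by rw [ee_apply]; exact if_neg (by omega))
          (fun hb => absurd (Finset.mem_range.mpr (by omega)) hb)]
        rw [ee_apply, if_pos rfl]
      · rw [if_neg hj]
        refine Finset.sum_eq_zero fun i hi => by
          rw [Finset.mem_range] at hi
          rw [ee_apply]
          exact if_neg (by omega)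
    rw [hsum]
    split_ifs with hj
    · ring
    · ring

def uuv (k : ℕ) : Hs := ee (2*k+2) - ee 0 + ∑ l ∈ Finset.range k, ee (2*l+1)

theorem cf_uuv (k m : ℕ) : cf (uuv k) m = if m = 2*k then (2:ℂ)⁻¹ ^ k else 0 := by
  have hlin : cf (uuv k) m
      = cf (ee (2*k+2)) m - cf (ee 0) m + ∑ l ∈ Finset.range k, cf (ee (2*l+1)) m := by
    have h1 : cfL (uuv k) = cfL (ee (2*k+2)) - cfL (ee 0) + ∑ l ∈ Finset.range k, cfL (ee (2*l+1)) := by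
      unfold uuv
      rw [map_add, map_sub, map_sum]
    have h2 := congrFun h1 m
    show cfL (uuv k) m = cfL (ee (2*k+2)) m - cfL (ee 0) m + ∑ l ∈ Finset.range k, cfL (ee (2*l+1)) m
    simpa using h2
  have hsum : ∑ l ∈ Finset.range k, cf (ee (2*l+1)) m
      = if (¬ Even m) ∧ m/2 < k then (2:ℂ)⁻¹ ^ (m/2) else 0 := by
    by_cases h : (¬ Even m) ∧ m/2 < k
    · obtain ⟨ho, hk⟩ := h
      have h2 : m % 2 = 1 := Nat.odd_iff.mp (Nat.not_even_iff_odd.mp ho)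
      rw [if_pos ⟨ho, hk⟩]
      rw [Finset.sum_eq_single (m/2)
        (fun b _ hne => by rw [cf_ee_odd]; exact if_neg (by omega))
        (fun hb => absurd (Finset.mem_range.mpr hk) hb)]
      rw [cf_ee_odd, if_pos (by omega)]
    · rw [if_neg h]
      push_neg at h
      refine Finset.sum_eq_zero fun l hl => by
        rw [cf_ee_odd]
        refine if_neg fun hm => ?_
        have ho : ¬ Even m := by
          subst hm
          simp [Nat.even_add_one, Nat.even_mul]
        have hk := h ho
        rw [Finset.mem_range] at hl
        omega
  rw [hlin, hsum, cf_ee_zero, cf_ee_even]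
  by_cases h : Even m <;> by_cases hm : m = 2*k
  · have h1 : ¬(¬Even m ∧ m/2 < k) := fun hc => hc.1 h
    simp only [if_pos h, if_pos hm, if_neg h1]
    ring
  · have h1 : ¬(¬Even m ∧ m/2 < k) := fun hc => hc.1 h
    simp only [if_pos h, if_neg hm, if_neg h1]
    ring
  · exact absurd (by simpa [hm] using even_two_mul k) h
  · have h2 : m % 2 = 1 := Nat.odd_iff.mp (Nat.not_even_iff_odd.mp h)
    by_cases hk : k ≤ m/2
    · have h1 : ¬(¬Even m ∧ m/2 < k) := fun hc => absurd hc.2 (by omega)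
      simp only [if_neg h, if_pos hk, if_neg h1, if_neg hm]
      ring
    · have h1 : (¬Even m ∧ m/2 < k) := ⟨h, by omega⟩
      simp only [if_neg h, if_neg hk, if_pos h1, if_neg hm]
      ring


theorem iotaL_of_cf_single {h : Hs} {m0 : ℕ} {c : ℂ}
    (hc : ∀ m, cf h m = if m = m0 then c else 0) {z : ℂ} (hz : ‖z‖ < 1) :
    iotaL h z = c * z ^ m0 := by
  rw [iotaL_apply h hz,
    tsum_eq_single m0 (fun b hb => by rw [hc b, if_neg hb, zero_mul]),
    hc m0, if_pos rfl]

theorem iotaL_ee_odd (l : ℕ) {z : ℂ} (hz : ‖z‖ < 1) :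
    iotaL (ee (2*l+1)) z = (2:ℂ)⁻¹ ^ l * z ^ (2*l+1) :=
  iotaL_of_cf_single (fun m => cf_ee_odd l m) hz

theorem iotaL_uuv (k : ℕ) {z : ℂ} (hz : ‖z‖ < 1) :
    iotaL (uuv k) z = (2:ℂ)⁻¹ ^ k * z ^ (2*k) :=
  iotaL_of_cf_single (fun m => cf_uuv k m) hz

def mono (j : ℕ) : Hs := if Even j then (2:ℂ)^(j/2) • uuv (j/2) else (2:ℂ)^(j/2) • ee j

theorem iotaL_mono (j : ℕ) {z : ℂ} (hz : ‖z‖ < 1) : iotaL (mono j) z = z ^ j := by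
  unfold mono
  split_ifs with h
  · have h2 : j % 2 = 0 := Nat.even_iff.mp h
    rw [map_smul]
    calc ((2:ℂ)^(j/2) • iotaL (uuv (j/2))) z = (2:ℂ)^(j/2) * iotaL (uuv (j/2)) z := rfl
    _ = (2:ℂ)^(j/2) * ((2:ℂ)⁻¹ ^ (j/2) * z ^ (2*(j/2))) := by rw [iotaL_uuv _ hz]
    _ = z ^ j := by
        rw [show 2*(j/2) = j from by omega, ← mul_assoc, ← mul_pow]
        norm_num
  · have h2 : j % 2 = 1 := Nat.odd_iff.mp (Nat.not_even_iff_odd.mp h)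
    obtain ⟨l, rfl⟩ : ∃ l, j = 2*l+1 := ⟨j/2, by omega⟩
    rw [map_smul]
    calc ((2:ℂ)^((2*l+1)/2) • iotaL (ee (2*l+1))) z
        = (2:ℂ)^((2*l+1)/2) * iotaL (ee (2*l+1)) z := rfl
    _ = (2:ℂ)^l * ((2:ℂ)⁻¹ ^ l * z ^ (2*l+1)) := by
        rw [iotaL_ee_odd l hz, show (2*l+1)/2 = l from by omega]
    _ = z ^ (2*l+1) := by
        rw [← mul_assoc, ← mul_pow]
        norm_num

theorem exists_poly_preimage (p : Polynomial ℂ) :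
    ∃ h : Hs, ∀ z ∈ ball (0:ℂ) 1, iotaL h z = p.eval z := by
  refine ⟨∑ i ∈ Finset.range (p.natDegree + 1), p.coeff i • mono i, fun z hz => ?_⟩
  have hz' : ‖z‖ < 1 := mem_ball_zero_iff.mp hz
  rw [map_sum, Polynomial.eval_eq_sum_range]
  calc (∑ i ∈ Finset.range (p.natDegree + 1), iotaL (p.coeff i • mono i)) z
      = ∑ i ∈ Finset.range (p.natDegree + 1), (iotaL (p.coeff i • mono i)) z :=
        Finset.sum_apply _ _ _
  _ = ∑ i ∈ Finset.range (p.natDegree + 1), p.coeff i * z ^ i := by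
      refine Finset.sum_congr rfl fun i _ => ?_
      rw [map_smul]
      calc (p.coeff i • iotaL (mono i)) z = p.coeff i * iotaL (mono i) z := rfl
      _ = p.coeff i * z ^ i := by rw [iotaL_mono i hz']

def Sset : Submodule ℂ Hs where
  carrier := {h : Hs | ∃ p : Polynomial ℂ, ∀ z ∈ ball (0:ℂ) 1, iotaL h z = p.eval z}
  add_mem' := by
    rintro a b ⟨p, hp⟩ ⟨q, hq⟩
    refine ⟨p + q, fun z hz => ?_⟩
    rw [map_add]
    calc (iotaL a + iotaL b) z = iotaL a z + iotaL b z := rfl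
    _ = _ := by rw [hp z hz, hq z hz, Polynomial.eval_add]
  zero_mem' := ⟨0, fun z hz => by simp⟩
  smul_mem' := by
    rintro d x ⟨p, hp⟩
    refine ⟨Polynomial.C d * p, fun z hz => ?_⟩
    rw [map_smul]
    calc (d • iotaL x) z = d * iotaL x z := rfl
    _ = _ := by rw [hp z hz]; simp

theorem mono_mem (j : ℕ) : mono j ∈ Sset :=
  ⟨Polynomial.X ^ j, fun z hz => by
    rw [iotaL_mono j (mem_ball_zero_iff.mp hz)]; simp⟩

theorem ee_odd_mem (l : ℕ) : ee (2*l+1) ∈ Sset := by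
  have h : ee (2*l+1) = (2:ℂ)⁻¹^l • mono (2*l+1) := by
    unfold mono
    rw [if_neg (by simp [Nat.even_add_one, Nat.even_mul]), smul_smul,
      show (2*l+1)/2 = l from by omega, ← mul_pow]
    norm_num
  rw [h]
  exact Sset.smul_mem _ (mono_mem _)

theorem uuv_mem (k : ℕ) : uuv k ∈ Sset := by
  have h : uuv k = (2:ℂ)⁻¹^k • mono (2*k) := by
    unfold mono
    rw [if_pos (even_two_mul k), show (2*k)/2 = k from by omega, smul_smul, ← mul_pow]
    norm_num
  rw [h]
  exact Sset.smul_mem _ (mono_mem _)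

def yN (N : ℕ) : Hs := ee 0 - (N:ℂ)⁻¹ • ∑ k ∈ Finset.range N, ee (2*k+2)

theorem yN_mem (N : ℕ) (hN : 1 ≤ N) : yN N ∈ Sset := by
  have hc : ((N:ℂ)) ≠ 0 := Nat.cast_ne_zero.mpr (by omega)
  have h : yN N = (N:ℂ)⁻¹ • ∑ k ∈ Finset.range N,
      ((∑ l ∈ Finset.range k, ee (2*l+1)) - uuv k) := by
    unfold yN
    have hterm : ∀ k, (∑ l ∈ Finset.range k, ee (2*l+1)) - uuv k = ee 0 - ee (2*k+2) := by
      intro k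
      unfold uuv
      abel
    rw [Finset.sum_congr rfl (fun k _ => hterm k), Finset.sum_sub_distrib,
      Finset.sum_const, Finset.card_range, ← Nat.cast_smul_eq_nsmul ℂ N (ee 0),
      smul_sub, smul_smul, inv_mul_cancel₀ hc, one_smul]
  rw [h]
  exact Sset.smul_mem _ (Submodule.sum_mem _ fun k _ => Submodule.sub_mem _
    (Submodule.sum_mem _ fun l _ => ee_odd_mem l) (uuv_mem k))

theorem norm_sum_ee_even (N : ℕ) :
    ‖∑ k ∈ Finset.range N, ee (2*k+2)‖ ^ ((2:ℝ≥0∞).toReal) = (N:ℝ) := by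
  have himg : ∑ k ∈ Finset.range N, ee (2*k+2)
      = ∑ i ∈ (Finset.range N).image (fun k => 2*k+2), lp.single 2 i ((fun _ => (1:ℂ)) i) := by
    rw [Finset.sum_image (fun a _ b _ h => by omega)]
    rfl
  rw [himg, lp.norm_sum_single (by norm_num)]
  rw [Finset.sum_congr rfl (fun i _ => by rw [norm_one, Real.one_rpow])]
  rw [Finset.sum_const, Finset.card_image_of_injective _ (fun a b h => by omega),
    Finset.card_range]
  simp

theorem ee0_mem_closure : ee 0 ∈ Sset.topologicalClosure := by
  rw [← SetLike.mem_coe, Submodule.topologicalClosure_coe]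
  have htwo : ((2:ℝ≥0∞).toReal) = ((2:ℕ):ℝ) := by norm_num
  have hnorm : ∀ N : ℕ, 1 ≤ N → ‖yN N - ee 0‖ = Real.sqrt ((N:ℝ)⁻¹) := by
    intro N hN
    have hc : ((N:ℝ)) ≠ 0 := Nat.cast_ne_zero.mpr (by omega)
    have h1 : yN N - ee 0 = -((N:ℂ)⁻¹ • ∑ k ∈ Finset.range N, ee (2*k+2)) := by
      unfold yN
      abel
    have h2 : ‖yN N - ee 0‖ = (N:ℝ)⁻¹ * ‖∑ k ∈ Finset.range N, ee (2*k+2)‖ := by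
      rw [h1, norm_neg, norm_smul, norm_inv, Complex.norm_natCast]
    have h3 : ‖yN N - ee 0‖ ^ (2:ℕ) = (N:ℝ)⁻¹ := by
      have h4 := norm_sum_ee_even N
      rw [htwo, Real.rpow_natCast] at h4
      rw [h2, mul_pow, h4]
      field_simp
    rw [← h3, Real.sqrt_sq (norm_nonneg _)]
  have htend : Tendsto (fun N => yN N) atTop (nhds (ee 0)) := by
    rw [tendsto_iff_norm_sub_tendsto_zero]
    have hbase : Tendsto (fun N : ℕ => ((N:ℝ))⁻¹) atTop (nhds 0) :=
      tendsto_inv_atTop_zero.comp tendsto_natCast_atTop_atTop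
    have hs := hbase.sqrt
    rw [Real.sqrt_zero] at hs
    refine hs.congr' ?_
    filter_upwards [eventually_ge_atTop 1] with N hN
    exact (hnorm N hN).symm
  exact mem_closure_of_tendsto htend
    (by filter_upwards [eventually_ge_atTop 1] with N hN using yN_mem N hN)

theorem ee_mem_closure (n : ℕ) : ee n ∈ Sset.topologicalClosure := by
  rcases Nat.even_or_odd n with ⟨t, rfl⟩ | ⟨t, rfl⟩
  · rcases t with _ | k
    · exact ee0_mem_closure
    · rw [show (k+1)+(k+1) = 2*k+2 from by omega]
      have h : ee (2*k+2) = uuv k + ee 0 - ∑ l ∈ Finset.range k, ee (2*l+1) := by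
        unfold uuv
        abel
      rw [h]
      refine Submodule.sub_mem _ (Submodule.add_mem _ ?_ ee0_mem_closure) ?_
      · exact Sset.le_topologicalClosure (uuv_mem k)
      · exact Submodule.sum_mem _ fun l _ => Sset.le_topologicalClosure (ee_odd_mem l)
  · exact Sset.le_topologicalClosure (ee_odd_mem t)

theorem dense_Sset : Dense (Sset : Set Hs) := by
  rw [Submodule.dense_iff_topologicalClosure_eq_top]
  rw [Submodule.eq_top_iff']
  intro y
  have hhs : HasSum (fun i => lp.single 2 i (y i)) y := lp.hasSum_single (by norm_num) y
  have hcl : IsClosed (Sset.topologicalClosure : Set Hs) :=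
    Submodule.isClosed_topologicalClosure _
  have hmem : ∀ s : Finset ℕ, (∑ i ∈ s, lp.single 2 i (y i)) ∈ Sset.topologicalClosure := by
    intro s
    refine Submodule.sum_mem _ fun i _ => ?_
    have h : lp.single 2 i (y i) = (y i) • ee i := by
      rw [ee, ← lp.single_smul]
      congr 1
      simp
    rw [h]
    exact Submodule.smul_mem _ _ (ee_mem_closure i)
  exact hcl.mem_of_tendsto hhs (Eventually.of_forall hmem)

def phi : Hs →L[ℂ] ℂ :=
  LinearMap.mkContinuous
    { toFun := fun y => y 0
      map_add' := fun x y => by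
        show (x + y) 0 = x 0 + y 0
        rw [lp.coeFn_add]; rfl
      map_smul' := fun c y => by
        show (c • y) 0 = c * y 0
        rw [lp.coeFn_smul]; rfl }
    1 (fun y => by simpa using norm_coord_le y 0)

theorem phi_ee (n : ℕ) : phi (ee n) = if (0:ℕ) = n then 1 else 0 := ee_apply n 0

def sk (k : ℕ) : Hs := ∑ j ∈ Finset.range ((k+1)/2), ee (2*j+1)

theorem phi_sk (k : ℕ) : phi (sk k) = 0 := by
  unfold sk
  rw [map_sum]
  exact Finset.sum_eq_zero fun j _ => by rw [phi_ee, if_neg (by omega)]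

theorem iotaL_sk (k : ℕ) {z : ℂ} (hz : ‖z‖ < 1) :
    iotaL (sk k) z = ∑ j ∈ Finset.range ((k+1)/2), (2:ℂ)⁻¹^j * z^(2*j+1) := by
  unfold sk
  rw [map_sum]
  calc (∑ j ∈ Finset.range ((k+1)/2), iotaL (ee (2*j+1))) z
      = ∑ j ∈ Finset.range ((k+1)/2), iotaL (ee (2*j+1)) z := Finset.sum_apply _ _ _
  _ = _ := Finset.sum_congr rfl fun j _ => iotaL_ee_odd j hz

theorem sum_aT (k : ℕ) (z : ℂ) :
    ∑ n ∈ Finset.range (k+1), cf (ee 0) n * z ^ n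
      = ∑ j ∈ Finset.range ((k+1)/2), (2:ℂ)⁻¹^j * z^(2*j+1) := by
  induction k with
  | zero => simp [cf_ee_zero]
  | succ k ih =>
    rw [Finset.sum_range_succ, ih, cf_ee_zero]
    rcases Nat.even_or_odd (k+1) with he | ho
    · have h2 : (k+1) % 2 = 0 := Nat.even_iff.mp he
      rw [if_pos he, zero_mul, add_zero, show (k+1+1)/2 = (k+1)/2 from by omega]
    · have h2 : (k+1) % 2 = 1 := Nat.odd_iff.mp ho
      rw [if_neg (Nat.not_even_iff_odd.mpr ho)]
      rw [show (k+1+1)/2 = (k+1)/2 + 1 from by omega, Finset.sum_range_succ]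
      congr 1
      rw [show 2*((k+1)/2)+1 = k+1 from by omega]

end Stmt15Aux

/-- There exist a Hilbert holomorphic function space `H` on the unit disk in which the
polynomials are dense, and an `f ∈ H` lying outside the closed linear span of its Taylor
partial sums; consequently no triangular summability method applied to the partial sums
converges to `f`. -/
theorem stmt15 :
    ∃ (H : Type) (_ : NormedAddCommGroup H) (_ : InnerProductSpace ℂ H) (_ : CompleteSpace H)
      (ι : H →ₗ[ℂ] (ℂ → ℂ)),
      (∀ h : H, DifferentiableOn ℂ (ι h) (ball (0 : ℂ) 1)) ∧
      (∀ h₁ h₂ : H, (∀ z ∈ ball (0 : ℂ) 1, ι h₁ z = ι h₂ z) → h₁ = h₂) ∧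
      (∀ K : Set ℂ, IsCompact K → K ⊆ ball (0 : ℂ) 1 →
        ∃ C : ℝ, ∀ h : H, ∀ z ∈ K, ‖ι h z‖ ≤ C * ‖h‖) ∧
      (∀ p : Polynomial ℂ, ∃ h : H, ∀ z ∈ ball (0 : ℂ) 1, ι h z = p.eval z) ∧
      Dense {h : H | ∃ p : Polynomial ℂ, ∀ z ∈ ball (0 : ℂ) 1, ι h z = p.eval z} ∧
      ∃ (f : H) (a : ℕ → ℂ) (s : ℕ → H),
        -- `a` is the Taylor coefficient sequence of `f`
        (∀ z ∈ ball (0 : ℂ) 1, HasSum (fun n => a n * z ^ n) (ι f z)) ∧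
        -- `s k` is the k-th Taylor partial sum of `f`, as an element of `H`
        (∀ k, ∀ z ∈ ball (0 : ℂ) 1, ι (s k) z = ∑ n ∈ Finset.range (k + 1), a n * z ^ n) ∧
        -- `f` is outside the closed linear span of its partial sums
        f ∉ (Submodule.span ℂ (Set.range s)).topologicalClosure ∧
        -- hence no triangular summability method converges to `f`
        ∀ c : ℕ → ℕ → ℂ,
          ¬ Filter.Tendsto (fun n => ∑ k ∈ Finset.range (n + 1), c n k • s k)
            Filter.atTop (nhds f) := by
  refine ⟨Hs, inferInstance, inferInstance, inferInstance, iotaL,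
    fun h => iotaL_differentiableOn h, ?_, ?_, exists_poly_preimage, dense_Sset,
    ee 0, (fun m => cf (ee 0) m), sk, ?_, ?_, ?_, ?_⟩
  · intro h₁ h₂ hagree
    have h0 : ∀ z ∈ ball (0:ℂ) 1, iotaL (h₁ - h₂) z = 0 := by
      intro z hz
      rw [map_sub]
      calc (iotaL h₁ - iotaL h₂) z = iotaL h₁ z - iotaL h₂ z := rfl
      _ = 0 := by rw [hagree z hz, sub_self]
    exact sub_eq_zero.mp (iotaL_eq_zero h0)
  · intro K _ _
    exact ⟨∑' m, uu0 m, fun h z _ => iotaL_norm_le h z⟩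
  · intro z hz
    exact hasSum_iotaL (ee 0) (mem_ball_zero_iff.mp hz)
  · intro k z hz
    rw [iotaL_sk k (mem_ball_zero_iff.mp hz), sum_aT]
  · intro hmem
    have hle : Submodule.span ℂ (Set.range sk) ≤ LinearMap.ker (phi : Hs →ₗ[ℂ] ℂ) := by
      rw [Submodule.span_le]
      rintro _ ⟨k, rfl⟩
      simpa [LinearMap.mem_ker] using phi_sk k
    have hcl : (Submodule.span ℂ (Set.range sk)).topologicalClosure
        ≤ LinearMap.ker (phi : Hs →ₗ[ℂ] ℂ) :=
      Submodule.topologicalClosure_minimal _ hle (ContinuousLinearMap.isClosed_ker phi)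
    have h0 : phi (ee 0) = 0 := hcl hmem
    rw [phi_ee, if_pos rfl] at h0
    exact one_ne_zero h0
  · intro c hconv
    have h1 : Tendsto (fun n => phi (∑ k ∈ Finset.range (n+1), c n k • sk k))
        atTop (nhds (phi (ee 0))) := (phi.continuous.tendsto _).comp hconv
    have h2 : ∀ n, phi (∑ k ∈ Finset.range (n+1), c n k • sk k) = 0 := by
      intro n
      rw [map_sum]
      exact Finset.sum_eq_zero fun k _ => by rw [map_smul, phi_sk, smul_zero]
    have h3 : Tendsto (fun _ : ℕ => (0:ℂ)) atTop (nhds (phi (ee 0))) := by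
      refine h1.congr fun n => (h2 n)
    have h4 : phi (ee 0) = 0 := tendsto_nhds_unique h3 tendsto_const_nhds
    rw [phi_ee, if_pos rfl] at h4
    exact one_ne_zero h4
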